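/- Let n ≥ 1 and let s > t ≥ 0 be real numbers. Let T : lp (fun _ : ℕ => ℝ) 2 → lp (fun _ : ℕ => ℝ) 2 be a continuous linear map such that (T φ) m = (m + (n−1)/2)^{t−s} · φ m for every φ ∈ ℓ² and every m ∈ ℕ. Then T is a compact operator. (This diagonal operator realizes the inclusion L²_s(S^n) ↪ L²_t(S^n) in spherical harmonic coordinates; its compactness, proved by approximating with the finite-rank truncations T_a, gives the compactness of the Sobolev embedding.) -/

import Mathlib

open scoped ENNReal

noncomputable section

set_option maxHeartbeats 1000000

lemma aux_two_pos : (0 : ℝ) < (2 : ℝ≥0∞).toReal := by norm_num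

lemma aux_single_apply (m j : ℕ) (a : ℝ) :
    (lp.single (E := fun _ : ℕ => ℝ) 2 m a : ℕ → ℝ) j = if j = m then a else 0 := by
  by_cases hj : j = m
  · subst hj; rw [lp.single_apply_self]; simp
  · rw [lp.single_apply_ne 2 m _ hj]; simp [hj]

lemma aux_single_add (m : ℕ) (a b : ℝ) :
    lp.single (E := fun _ : ℕ => ℝ) 2 m (a + b) = lp.single 2 m a + lp.single 2 m b := by
  refine lp.ext ?_
  funext j
  rw [lp.coeFn_add, Pi.add_apply, aux_single_apply, aux_single_apply, aux_single_apply]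
  by_cases hj : j = m <;> simp [hj]

lemma aux_single_smul (c : ℝ) (m : ℕ) (a : ℝ) :
    lp.single (E := fun _ : ℕ => ℝ) 2 m (c * a) = c • lp.single 2 m a := by
  refine lp.ext ?_
  funext j
  rw [lp.coeFn_smul, Pi.smul_apply, aux_single_apply, aux_single_apply]
  by_cases hj : j = m <;> simp [hj]

/-- The rank-one operator `φ ↦ lp.single 2 m (φ m)` on real `ℓ²`. -/
def auxSingleEval (m : ℕ) : lp (fun _ : ℕ => ℝ) 2 →L[ℝ] lp (fun _ : ℕ => ℝ) 2 :=
  LinearMap.mkContinuous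
    { toFun := fun φ => lp.single 2 m (φ m)
      map_add' := fun φ ψ => by
        dsimp only
        rw [show ((φ + ψ : lp (fun _ : ℕ => ℝ) 2) : ℕ → ℝ) m = φ m + ψ m by
          rw [lp.coeFn_add]; rfl]
        exact aux_single_add m (φ m) (ψ m)
      map_smul' := fun c φ => by
        dsimp only
        rw [show ((c • φ : lp (fun _ : ℕ => ℝ) 2) : ℕ → ℝ) m = c * φ m by
          rw [lp.coeFn_smul]; rfl]
        exact aux_single_smul c m (φ m) }
    1 (fun φ => by
      simp only [LinearMap.coe_mk, AddHom.coe_mk, one_mul]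
      rw [show ‖lp.single (E := fun _ : ℕ => ℝ) 2 m (φ m)‖ = ‖(φ : ℕ → ℝ) m‖ from
        lp.norm_single (E := fun _ : ℕ => ℝ) (p := 2) (by norm_num) m ((φ : ℕ → ℝ) m)]
      exact lp.norm_apply_le_norm (by norm_num) φ m)

lemma auxSingleEval_apply (m : ℕ) (φ : lp (fun _ : ℕ => ℝ) 2) :
    auxSingleEval m φ = lp.single 2 m (φ m) := rfl

/-- The truncation projection onto the first `N` coordinates. -/
def auxProj (N : ℕ) : lp (fun _ : ℕ => ℝ) 2 →L[ℝ] lp (fun _ : ℕ => ℝ) 2 :=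
  ∑ m ∈ Finset.range N, auxSingleEval m

lemma auxProj_apply' (N : ℕ) (φ : lp (fun _ : ℕ => ℝ) 2) :
    auxProj N φ = ∑ m ∈ Finset.range N, lp.single 2 m (φ m) := by
  rw [auxProj, ContinuousLinearMap.sum_apply]
  exact Finset.sum_congr rfl fun m _ => auxSingleEval_apply m φ

lemma auxProj_apply (N : ℕ) (φ : lp (fun _ : ℕ => ℝ) 2) (j : ℕ) :
    (auxProj N φ : ℕ → ℝ) j = if j < N then φ j else 0 := by
  rw [auxProj_apply', lp.coeFn_sum]
  simp only [Finset.sum_apply]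
  have : ∀ m ∈ Finset.range N, (lp.single (E := fun _ : ℕ => ℝ) 2 m (φ m) : ℕ → ℝ) j
      = if j = m then φ j else 0 := by
    intro m _
    rw [aux_single_apply]
    by_cases hj : j = m
    · subst hj; simp
    · simp [hj]
  rw [Finset.sum_congr rfl this, Finset.sum_ite_eq (Finset.range N) j fun _ => φ j]
  simp [Finset.mem_range]

/-- A continuous linear map whose range lies in a finite-dimensional submodule is compact. -/
lemma aux_compact_of_range_le {E F : Type*} [NormedAddCommGroup E] [NormedSpace ℝ E]
    [NormedAddCommGroup F] [NormedSpace ℝ F] (f : E →L[ℝ] F) (V : Submodule ℝ F)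
    [FiniteDimensional ℝ V] (h : ∀ x, f x ∈ V) : IsCompactOperator f := by
  refine ⟨(↑) '' (Metric.closedBall (0 : V) (‖f‖ + 1)),
    ((isCompact_closedBall _ _).image continuous_subtype_val), ?_⟩
  refine Filter.mem_of_superset (Metric.closedBall_mem_nhds (0 : E) one_pos) ?_
  intro x hx
  refine ⟨⟨f x, h x⟩, ?_, rfl⟩
  simp only [Metric.mem_closedBall, dist_zero_right]
  have hnorm : ‖(⟨f x, h x⟩ : V)‖ = ‖f x‖ := rfl
  rw [hnorm]
  calc ‖f x‖ ≤ ‖f‖ * ‖x‖ := f.le_opNorm x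
    _ ≤ ‖f‖ * 1 := mul_le_mul_of_nonneg_left (mem_closedBall_zero_iff.mp hx) (norm_nonneg f)
    _ ≤ ‖f‖ + 1 := by linarith [norm_nonneg f]

/-- The diagonal operator on `ℓ²` with entries `(m + (n-1)/2)^{t-s}`
(`s > t ≥ 0`), which realizes the inclusion `L²_s(Sⁿ) ↪ L²_t(Sⁿ)` in spherical harmonic
coordinates, is a compact operator. -/
theorem diagonal_inclusion_compact (n : ℕ) (hn : 1 ≤ n) (s t : ℝ) (ht : 0 ≤ t) (hts : t < s)
    (T : lp (fun _ : ℕ => ℝ) 2 →L[ℝ] lp (fun _ : ℕ => ℝ) 2)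
    (hT : ∀ (φ : lp (fun _ : ℕ => ℝ) 2) (m : ℕ),
      T φ m = ((m : ℝ) + ((n : ℝ) - 1) / 2) ^ (t - s) * φ m) :
    IsCompactOperator T := by
  set TN : ℕ → lp (fun _ : ℕ => ℝ) 2 →L[ℝ] lp (fun _ : ℕ => ℝ) 2 :=
    fun N => (auxProj N).comp T with hTN
  have hcompact : ∀ N, IsCompactOperator (TN N) := by
    intro N
    haveI : FiniteDimensional ℝ
        (Submodule.span ℝ ((fun m : ℕ => lp.single (E := fun _ : ℕ => ℝ) 2 m (1 : ℝ)) ''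
          (Finset.range N))) :=
      FiniteDimensional.span_of_finite ℝ ((Finset.range N).finite_toSet.image _)
    refine aux_compact_of_range_le _
      (Submodule.span ℝ ((fun m : ℕ => lp.single 2 m (1 : ℝ)) '' (Finset.range N))) ?_
    intro φ
    have : TN N φ = ∑ m ∈ Finset.range N, (T φ m) • lp.single 2 m (1 : ℝ) := by
      show auxProj N (T φ) = _
      rw [auxProj_apply']
      refine Finset.sum_congr rfl fun m _ => ?_
      rw [← aux_single_smul, mul_one]
    rw [this]
    exact Submodule.sum_mem _ fun m hm => Submodule.smul_mem _ _
      (Submodule.subset_span ⟨m, by simpa using hm, rfl⟩)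
  have key : ∀ N : ℕ, 1 ≤ N → ‖TN N - T‖ ≤ (N : ℝ) ^ (t - s) := by
    intro N hN
    have hNpos : (0 : ℝ) < N := by exact_mod_cast hN
    have hε : (0 : ℝ) ≤ (N : ℝ) ^ (t - s) := Real.rpow_nonneg hNpos.le _
    refine ContinuousLinearMap.opNorm_le_bound _ hε ?_
    intro φ
    have hcoord : ∀ j : ℕ, ‖((TN N - T) φ : ℕ → ℝ) j‖ ≤ (N : ℝ) ^ (t - s) * ‖(φ : ℕ → ℝ) j‖ := by
      intro j
      have h1 : ((TN N - T) φ : ℕ → ℝ) j = (auxProj N (T φ) : ℕ → ℝ) j - T φ j := by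
        have : (TN N - T) φ = auxProj N (T φ) - T φ := by
          simp [hTN, ContinuousLinearMap.sub_apply]
        rw [this, lp.coeFn_sub, Pi.sub_apply]
      rw [h1, auxProj_apply]
      by_cases hj : j < N
      · simp only [hj, if_true, sub_self, norm_zero]
        positivity
      · simp only [hj, if_false, zero_sub, norm_neg, hT φ j, norm_mul]
        refine mul_le_mul_of_nonneg_right ?_ (norm_nonneg _)
        have hbase : (N : ℝ) ≤ (j : ℝ) + ((n : ℝ) - 1) / 2 := by
          have h1 : (N : ℝ) ≤ (j : ℝ) := by exact_mod_cast not_lt.mp hj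
          have h2 : (0 : ℝ) ≤ ((n : ℝ) - 1) / 2 := by
            have : (1 : ℝ) ≤ n := by exact_mod_cast hn
            linarith
          linarith
        have hbpos : (0 : ℝ) < (j : ℝ) + ((n : ℝ) - 1) / 2 := lt_of_lt_of_le hNpos hbase
        rw [Real.norm_eq_abs, abs_of_nonneg (Real.rpow_nonneg hbpos.le _)]
        exact Real.rpow_le_rpow_of_nonpos hNpos hbase (by linarith)
    set ε := (N : ℝ) ^ (t - s) with hε'
    refine lp.norm_le_of_forall_sum_le aux_two_pos (by positivity) ?_
    intro sfin
    have hsum : ∑ i ∈ sfin, ‖((TN N - T) φ : ℕ → ℝ) i‖ ^ (2 : ℝ≥0∞).toReal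
        ≤ ε ^ (2 : ℝ≥0∞).toReal * ∑ i ∈ sfin, ‖(φ : ℕ → ℝ) i‖ ^ (2 : ℝ≥0∞).toReal := by
      rw [Finset.mul_sum]
      refine Finset.sum_le_sum fun i _ => ?_
      rw [← Real.mul_rpow hε (norm_nonneg _)]
      exact Real.rpow_le_rpow (norm_nonneg _) (hcoord i) aux_two_pos.le
    refine hsum.trans ?_
    rw [show (ε * ‖φ‖) ^ (2 : ℝ≥0∞).toReal = ε ^ (2 : ℝ≥0∞).toReal * ‖φ‖ ^ (2 : ℝ≥0∞).toReal from
      Real.mul_rpow hε (norm_nonneg _)]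
    exact mul_le_mul_of_nonneg_left (lp.sum_rpow_le_norm_rpow aux_two_pos φ sfin)
      (Real.rpow_nonneg hε _)
  have htend : Filter.Tendsto TN Filter.atTop (nhds T) := by
    rw [tendsto_iff_norm_sub_tendsto_zero]
    have hb : Filter.Tendsto (fun N : ℕ => (N : ℝ) ^ (t - s)) Filter.atTop (nhds 0) := by
      have := (tendsto_rpow_neg_atTop (y := s - t) (by linarith)).comp
        (tendsto_natCast_atTop_atTop (R := ℝ))
      simpa [Function.comp_def, show -(s - t) = t - s by ring] using this
    refine squeeze_zero_norm' ?_ hb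
    filter_upwards [Filter.eventually_ge_atTop 1] with N hN
    rw [Real.norm_eq_abs, abs_of_nonneg (norm_nonneg _)]
    exact key N hN
  exact isCompactOperator_of_tendsto htend (Filter.Eventually.of_forall hcompact)
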